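/- Let 0 ≤ a ≤ b be real numbers and let f : ℝ → ℝ be continuous on [0, b]. Then the Jackson q-integral of f on [a, b] converges to the Riemann integral as q → 1 from below: lim_{q → 1⁻} (1-q) ∑_{k=0}^∞ q^k (b·f(q^k·b) - a·f(q^k·a)) = ∫_a^b f(x) dx. -/

import Mathlib

open Filter Topology

private lemma jackson_summable {q c M : ℝ} (hq0 : 0 < q) (hq1 : q < 1)
    (hc : 0 ≤ c) (f : ℝ → ℝ) (hM : ∀ x ∈ Set.Icc 0 c, |f x| ≤ M) :
    Summable (fun k : ℕ => q ^ k * (c * f (q ^ k * c))) := by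
  apply Summable.of_norm_bounded (g := fun k : ℕ => q ^ k * (c * M))
    (((summable_geometric_of_lt_one hq0.le hq1).mul_right _))
  intro k
  have hqk0 : (0:ℝ) ≤ q ^ k := pow_nonneg hq0.le k
  have hqk1 : q ^ k ≤ 1 := pow_le_one₀ hq0.le hq1.le
  have hmem : q ^ k * c ∈ Set.Icc (0:ℝ) c :=
    ⟨mul_nonneg hqk0 hc, by nlinarith⟩
  have := hM _ hmem
  have habs : |f (q ^ k * c)| ≤ M := this
  have : ‖q ^ k * (c * f (q ^ k * c))‖ = q ^ k * (c * |f (q ^ k * c)|) := by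
    rw [Real.norm_eq_abs, abs_mul, abs_mul, abs_of_nonneg hqk0, abs_of_nonneg hc]
  rw [this]
  have hMc : c * |f (q ^ k * c)| ≤ c * M := mul_le_mul_of_nonneg_left habs hc
  exact mul_le_mul_of_nonneg_left hMc hqk0

private lemma jackson_key {b : ℝ} (hb : 0 ≤ b) {f : ℝ → ℝ}
    (hf : ContinuousOn f (Set.Icc 0 b)) {c : ℝ} (hc0 : 0 ≤ c) (hcb : c ≤ b) :
    Tendsto (fun q : ℝ => (1 - q) * ∑' k : ℕ, q ^ k * (c * f (q ^ k * c)))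
      (𝓝[<] 1) (𝓝 (∫ x in (0:ℝ)..c, f x)) := by
  -- bound on f
  obtain ⟨M₀, hM₀⟩ := isCompact_Icc.exists_bound_of_continuousOn hf
  set M : ℝ := max M₀ 0 with hMdef
  have hMnn : 0 ≤ M := le_max_right _ _
  have hM : ∀ x ∈ Set.Icc (0:ℝ) b, |f x| ≤ M := fun x hx =>
    (hM₀ x hx).trans (le_max_left _ _)
  have hIccsub : Set.Icc (0:ℝ) c ⊆ Set.Icc 0 b := Set.Icc_subset_Icc le_rfl hcb
  have hMc : ∀ x ∈ Set.Icc (0:ℝ) c, |f x| ≤ M := fun x hx => hM x (hIccsub hx)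
  -- uniform continuity
  have huc : UniformContinuousOn f (Set.Icc 0 b) :=
    isCompact_Icc.uniformContinuousOn_of_continuous hf
  rw [Metric.tendsto_nhdsWithin_nhds]
  intro ε hε
  have hε' : 0 < ε / (2 * (b + 1)) := by positivity
  obtain ⟨δ₀, hδ₀, hδ⟩ := Metric.uniformContinuousOn_iff.mp huc _ hε'
  set ε' := ε / (2 * (b + 1)) with hε'def
  refine ⟨min 1 (δ₀ / (b + 1)), lt_min one_pos (by positivity), ?_⟩
  intro q hq hqd
  have hq1 : q < 1 := hq
  have hq0 : 0 < q := by
    have : |q - 1| < 1 := lt_of_lt_of_le (by rwa [Real.dist_eq] at hqd) (min_le_left _ _)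
    rw [abs_lt] at this; linarith
  have hqδ : 1 - q < δ₀ / (b + 1) := by
    have : |q - 1| < δ₀ / (b + 1) := lt_of_lt_of_le (by rwa [Real.dist_eq] at hqd) (min_le_right _ _)
    rw [abs_lt] at this; linarith
  -- basic facts
  have hqk0 : ∀ k : ℕ, (0:ℝ) < q ^ k := fun k => pow_pos hq0 k
  have hqk1 : ∀ k : ℕ, q ^ k ≤ 1 := fun k => pow_le_one₀ hq0.le hq1.le
  have hqkc : ∀ k : ℕ, q ^ k * c ∈ Set.Icc (0:ℝ) b := fun k =>
    ⟨mul_nonneg (hqk0 k).le hc0, le_trans (by nlinarith [hqk0 k, hqk1 k]) hcb⟩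
  have hqmono : ∀ k : ℕ, q ^ (k+1) * c ≤ q ^ k * c := fun k => by
    have h1 : 0 ≤ q ^ k * (1 - q) * c :=
      mul_nonneg (mul_nonneg (hqk0 k).le (by linarith)) hc0
    rw [pow_succ]; nlinarith [h1]
  -- integrability on subintervals of [0,b]
  have hint : ∀ u v : ℝ, u ∈ Set.Icc (0:ℝ) b → v ∈ Set.Icc (0:ℝ) b →
      IntervalIntegrable f MeasureTheory.volume u v := fun u v hu hv =>
    (hf.mono (Set.uIcc_subset_Icc hu hv)).intervalIntegrable
  -- summability
  have hsum : Summable (fun k : ℕ => q ^ k * (c * f (q ^ k * c))) :=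
    jackson_summable hq0 hq1 hc0 f hMc
  -- partial sums of the Jackson sum converge to J
  have hJ : Tendsto (fun n : ℕ => ∑ k ∈ Finset.range n, (1 - q) * (q ^ k * (c * f (q ^ k * c))))
      atTop (𝓝 ((1 - q) * ∑' k : ℕ, q ^ k * (c * f (q ^ k * c)))) :=
    ((hsum.hasSum.mul_left (1 - q)).tendsto_sum_nat)
  -- partial sums of integrals
  have hGsum : ∀ n : ℕ, ∑ k ∈ Finset.range n, ∫ x in (q ^ (k+1) * c)..(q ^ k * c), f x
      = ∫ x in (q ^ n * c)..c, f x := by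
    intro n
    have := intervalIntegral.sum_integral_adjacent_intervals
      (f := f) (μ := MeasureTheory.volume) (a := fun k => q ^ k * c) (n := n)
      (fun k _ => hint _ _ (hqkc k) (hqkc (k+1)))
    have h2 : ∀ k : ℕ, (∫ x in (q ^ (k+1) * c)..(q ^ k * c), f x)
        = -(∫ x in (q ^ k * c)..(q ^ (k+1) * c), f x) := fun k =>
      (intervalIntegral.integral_symm _ _)
    simp only [h2, Finset.sum_neg_distrib, this]
    rw [← intervalIntegral.integral_symm]
    simp [pow_zero, one_mul]
  -- convergence of ∫_{q^n c}^c f to ∫_0^c f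
  have hGlim : Tendsto (fun n : ℕ => ∫ x in (q ^ n * c)..c, f x) atTop
      (𝓝 (∫ x in (0:ℝ)..c, f x)) := by
    rw [tendsto_iff_dist_tendsto_zero]
    apply squeeze_zero (fun n => dist_nonneg) (g := fun n => M * (q ^ n * c))
    · intro n
      have hadd : (∫ x in (0:ℝ)..(q ^ n * c), f x) + (∫ x in (q ^ n * c)..c, f x)
          = ∫ x in (0:ℝ)..c, f x :=
        intervalIntegral.integral_add_adjacent_intervals
          (hint _ _ (Set.left_mem_Icc.mpr hb) (hqkc n))
          (hint _ _ (hqkc n) ⟨hc0, hcb⟩)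
      have : dist (∫ x in (q ^ n * c)..c, f x) (∫ x in (0:ℝ)..c, f x)
          = ‖∫ x in (0:ℝ)..(q ^ n * c), f x‖ := by
        rw [Real.dist_eq, ← hadd]
        simp [abs_sub_comm, Real.norm_eq_abs]
      rw [this]
      have hb' : ∀ x ∈ Set.uIoc (0:ℝ) (q ^ n * c), ‖f x‖ ≤ M := by
        intro x hx
        have hx' : x ∈ Set.Ioc (0:ℝ) (q ^ n * c) := by
          rwa [Set.uIoc_of_le (mul_nonneg (hqk0 n).le hc0)] at hx
        exact hM x ⟨hx'.1.le, hx'.2.trans (hqkc n).2⟩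
      calc ‖∫ x in (0:ℝ)..(q ^ n * c), f x‖ ≤ M * |q ^ n * c - 0| :=
            intervalIntegral.norm_integral_le_of_norm_le_const hb'
        _ = M * (q ^ n * c) := by
            rw [sub_zero, abs_of_nonneg (mul_nonneg (hqk0 n).le hc0)]
    · have : Tendsto (fun n : ℕ => q ^ n) atTop (𝓝 0) :=
        tendsto_pow_atTop_nhds_zero_of_lt_one hq0.le hq1
      have := ((this.mul_const c).const_mul M)
      simpa using this
  -- per-term bound
  have hterm : ∀ k : ℕ, |(1 - q) * (q ^ k * (c * f (q ^ k * c)))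
      - ∫ x in (q ^ (k+1) * c)..(q ^ k * c), f x| ≤ ε' * ((q ^ k - q ^ (k+1)) * c) := by
    intro k
    have hik : IntervalIntegrable f MeasureTheory.volume (q ^ (k+1) * c) (q ^ k * c) :=
      hint _ _ (hqkc (k+1)) (hqkc k)
    have hconst : (1 - q) * (q ^ k * (c * f (q ^ k * c)))
        = ∫ _x in (q ^ (k+1) * c)..(q ^ k * c), f (q ^ k * c) := by
      rw [intervalIntegral.integral_const, smul_eq_mul, pow_succ]
      ring
    rw [hconst, ← intervalIntegral.integral_sub (intervalIntegrable_const) hik]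
    have hbd : ∀ x ∈ Set.uIoc (q ^ (k+1) * c) (q ^ k * c),
        ‖f (q ^ k * c) - f x‖ ≤ ε' := by
      intro x hx
      have hx' : x ∈ Set.Ioc (q ^ (k+1) * c) (q ^ k * c) := by
        rwa [Set.uIoc_of_le (hqmono k)] at hx
      have hxI : x ∈ Set.Icc (0:ℝ) b :=
        ⟨le_trans (mul_nonneg (hqk0 (k+1)).le hc0) hx'.1.le, hx'.2.trans (hqkc k).2⟩
      have hdist : dist (q ^ k * c) x < δ₀ := by
        rw [Real.dist_eq, abs_of_nonneg (by linarith [hx'.2])]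
        have h1 : q ^ k * c - x < q ^ k * c - q ^ (k+1) * c := by linarith [hx'.1]
        have h2 : q ^ k * c - q ^ (k+1) * c = q ^ k * c * (1 - q) := by ring
        have h3 : q ^ k * c * (1 - q) ≤ b * (1 - q) := by
          have := (hqkc k).2; nlinarith
        have h4 : b * (1 - q) < δ₀ := by
          have hb1 : b < b + 1 := by linarith
          calc b * (1 - q) ≤ b * (δ₀ / (b + 1)) := by
                apply mul_le_mul_of_nonneg_left hqδ.le hb
            _ < (b + 1) * (δ₀ / (b + 1)) := by
                apply mul_lt_mul_of_pos_right hb1 (by positivity)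
            _ = δ₀ := by field_simp
        linarith
      exact le_of_lt (hδ _ (hqkc k) _ hxI hdist)
    have := intervalIntegral.norm_integral_le_of_norm_le_const hbd
    rw [Real.norm_eq_abs] at this
    calc |∫ x in (q ^ (k+1) * c)..(q ^ k * c), (f (q ^ k * c) - f x)|
        ≤ ε' * |q ^ k * c - q ^ (k+1) * c| := this
      _ = ε' * ((q ^ k - q ^ (k+1)) * c) := by
          rw [abs_of_nonneg (by linarith [hqmono k])]; ring
  -- uniform bound on partial-sum differences
  have hpartial : ∀ n : ℕ, |(∑ k ∈ Finset.range n, (1 - q) * (q ^ k * (c * f (q ^ k * c))))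
      - ∫ x in (q ^ n * c)..c, f x| ≤ ε' * c := by
    intro n
    rw [← hGsum n, ← Finset.sum_sub_distrib]
    calc |∑ k ∈ Finset.range n, ((1 - q) * (q ^ k * (c * f (q ^ k * c)))
          - ∫ x in (q ^ (k+1) * c)..(q ^ k * c), f x)|
        ≤ ∑ k ∈ Finset.range n, |(1 - q) * (q ^ k * (c * f (q ^ k * c)))
          - ∫ x in (q ^ (k+1) * c)..(q ^ k * c), f x| := Finset.abs_sum_le_sum_abs _ _
      _ ≤ ∑ k ∈ Finset.range n, ε' * ((q ^ k - q ^ (k+1)) * c) :=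
          Finset.sum_le_sum (fun k _ => hterm k)
      _ = ε' * c * (1 - q ^ n) := by
          rw [← Finset.mul_sum, ← Finset.sum_mul, Finset.sum_range_sub' (fun i => q ^ i),
            pow_zero]
          ring
      _ ≤ ε' * c := by
          nlinarith [mul_nonneg (mul_nonneg hε'.le hc0) (hqk0 n).le]
  -- conclude
  have hdiff : Tendsto (fun n : ℕ => |(∑ k ∈ Finset.range n, (1 - q) * (q ^ k * (c * f (q ^ k * c))))
      - ∫ x in (q ^ n * c)..c, f x|) atTop
      (𝓝 |(1 - q) * (∑' k : ℕ, q ^ k * (c * f (q ^ k * c))) - ∫ x in (0:ℝ)..c, f x|) :=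
    (hJ.sub hGlim).abs
  have hfinal : |(1 - q) * (∑' k : ℕ, q ^ k * (c * f (q ^ k * c))) - ∫ x in (0:ℝ)..c, f x| ≤ ε' * c :=
    le_of_tendsto hdiff (Eventually.of_forall hpartial)
  rw [Real.dist_eq]
  have hεc : ε' * c < ε := by
    have h1 : ε' * c ≤ ε' * (b+1) := by
      apply mul_le_mul_of_nonneg_left (by linarith) hε'.le
    have h2 : ε' * (b+1) = ε / 2 := by
      rw [hε'def]; field_simp
    linarith
  linarith

/-- For `0 ≤ a ≤ b` and `f` continuous on `[0, b]`, the Jackson q-integral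
`∫_a^b f d_q x = (1-q) ∑_{k=0}^∞ q^k (b f(q^k b) - a f(q^k a))` converges to the
Riemann integral `∫_a^b f(x) dx` as `q → 1⁻`. -/
theorem jackson_integral_tendsto_integral (a b : ℝ) (ha : 0 ≤ a) (hab : a ≤ b)
    (f : ℝ → ℝ) (hf : ContinuousOn f (Set.Icc 0 b)) :
    Tendsto (fun q : ℝ => (1 - q) * ∑' k : ℕ, q ^ k * (b * f (q ^ k * b) - a * f (q ^ k * a)))
      (𝓝[<] 1) (𝓝 (∫ x in a..b, f x)) := by
  have hb : (0:ℝ) ≤ b := ha.trans hab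
  obtain ⟨M₀, hM₀⟩ := isCompact_Icc.exists_bound_of_continuousOn hf
  set M : ℝ := max M₀ 0 with hMdef
  have hM : ∀ x ∈ Set.Icc (0:ℝ) b, |f x| ≤ M := fun x hx =>
    (hM₀ x hx).trans (le_max_left _ _)
  have hMa : ∀ x ∈ Set.Icc (0:ℝ) a, |f x| ≤ M := fun x hx =>
    hM x (Set.Icc_subset_Icc le_rfl hab hx)
  have hkb := jackson_key hb hf hb le_rfl
  have hka := jackson_key hb hf ha hab
  have hsub := hkb.sub hka
  have hint : ∀ u v : ℝ, u ∈ Set.Icc (0:ℝ) b → v ∈ Set.Icc (0:ℝ) b →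
      IntervalIntegrable f MeasureTheory.volume u v := fun u v hu hv =>
    (hf.mono (Set.uIcc_subset_Icc hu hv)).intervalIntegrable
  have hI : (∫ x in (0:ℝ)..b, f x) - (∫ x in (0:ℝ)..a, f x) = ∫ x in a..b, f x :=
    intervalIntegral.integral_interval_sub_left
      (hint _ _ (Set.left_mem_Icc.mpr hb) (Set.right_mem_Icc.mpr hb))
      (hint _ _ (Set.left_mem_Icc.mpr hb) ⟨ha, hab⟩)
  rw [hI] at hsub
  apply hsub.congr'
  have hmem : Set.Ioo (0:ℝ) 1 ∈ 𝓝[<] (1:ℝ) := Ioo_mem_nhdsLT_of_mem (by norm_num)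
  filter_upwards [hmem] with q hq
  obtain ⟨hq0, hq1⟩ := hq
  have hsb : Summable (fun k : ℕ => q ^ k * (b * f (q ^ k * b))) :=
    jackson_summable hq0 hq1 hb f hM
  have hsa : Summable (fun k : ℕ => q ^ k * (a * f (q ^ k * a))) :=
    jackson_summable hq0 hq1 ha f hMa
  have : (∑' k : ℕ, q ^ k * (b * f (q ^ k * b) - a * f (q ^ k * a)))
      = (∑' k : ℕ, q ^ k * (b * f (q ^ k * b))) - ∑' k : ℕ, q ^ k * (a * f (q ^ k * a)) := by
    rw [← Summable.tsum_sub hsb hsa]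
    congr 1; funext k; ring
  rw [this]; ring
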